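/- Let N¹, …, N^J (J ≥ 1) be K×K positive definite Hermitian complex matrices with Cholesky factors L¹, …, L^J, define l^j_DFE = (ln (L^j)₁₁², …, ln (L^j)_KK²) and l^j_Lin = (ln λ₁(N^j), …, ln λ_K(N^j)) where λ₁(N^j) ≥ … ≥ λ_K(N^j) are the eigenvalues of N^j, and let g : ℝ^K → ℝ be Schur-convex. Then min_{1≤j≤J} g(l^j_DFE) ≤ min_{1≤j≤J} g(l^j_Lin). -/

import Mathlib

open Matrix BigOperators
open scoped ComplexOrder

/-- `a` is majorized by `b` (written `a ≺ b`): after sorting both vectors in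
nonincreasing order, every partial sum of `a` is bounded above by the
corresponding partial sum of `b`, and the total sums agree. -/
def IsMajorizedBy {K : ℕ} (a b : Fin K → ℝ) : Prop :=
  ∃ σ τ : Equiv.Perm (Fin K),
    Antitone (a ∘ σ) ∧ Antitone (b ∘ τ) ∧
    (∀ j : ℕ, j < K →
      ∑ i ∈ Finset.univ.filter (fun i : Fin K => (i : ℕ) ≤ j), a (σ i) ≤
        ∑ i ∈ Finset.univ.filter (fun i : Fin K => (i : ℕ) ≤ j), b (τ i)) ∧
    (∑ i, a i) = (∑ i, b i)

/-- A function `g : ℝ^K → ℝ` is Schur-convex if `a ≺ b` implies `g a ≤ g b`. -/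
def SchurConvex {K : ℕ} (g : (Fin K → ℝ) → ℝ) : Prop :=
  ∀ a b : Fin K → ℝ, IsMajorizedBy a b → g a ≤ g b

section Aux

open Finset

variable {R : Type*} [CommRing R] {m K : ℕ}

theorem det_mul_expand (A : Matrix (Fin m) (Fin K) R) (B : Matrix (Fin K) (Fin m) R) :
    (A * B).det = ∑ f : Fin m → Fin K, (A.submatrix id f).det * ∏ i, B (f i) i := by
  simp_rw [Matrix.det_apply, Matrix.mul_apply, Matrix.submatrix_apply, id_eq,
    Fintype.prod_sum, Finset.smul_sum]
  rw [Finset.sum_comm]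
  refine Finset.sum_congr rfl fun f _ => ?_
  rw [Finset.sum_mul]
  refine Finset.sum_congr rfl fun σ _ => ?_
  rw [Finset.prod_mul_distrib, smul_mul_assoc]

/-- card of image of injective function on Fin m -/
private lemma card_image_fin {f : Fin m → Fin K} (hf : Function.Injective f) :
    (Finset.image f Finset.univ).card = m := by
  rw [Finset.card_image_of_injective _ hf, Finset.card_univ, Fintype.card_fin]

noncomputable def sortPerm {f : Fin m → Fin K} (hf : Function.Injective f) :
    Equiv.Perm (Fin m) :=
  Equiv.ofBijective
    (fun i => ((Finset.image f Finset.univ).orderIsoOfFin (card_image_fin hf)).symm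
      ⟨f i, Finset.mem_image_of_mem f (Finset.mem_univ i)⟩) <| by
    rw [Fintype.bijective_iff_injective_and_card]
    refine ⟨fun i j hij => hf ?_, rfl⟩
    have h2 := ((Finset.image f Finset.univ).orderIsoOfFin (card_image_fin hf)).symm.injective hij
    simpa [Subtype.ext_iff] using h2

lemma sortPerm_spec {f : Fin m → Fin K} (hf : Function.Injective f) (i : Fin m) :
    (Finset.image f Finset.univ).orderEmbOfFin (card_image_fin hf) (sortPerm hf i) = f i := by
  simp [sortPerm, ← Finset.coe_orderIsoOfFin_apply]

theorem cauchyBinet (A : Matrix (Fin m) (Fin K) R) (B : Matrix (Fin K) (Fin m) R) :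
    (A * B).det = ∑ g ∈ Finset.univ.filter (fun g : Fin m → Fin K => StrictMono g),
      (A.submatrix id g).det * (B.submatrix g id).det := by
  rw [det_mul_expand]
  rw [← Finset.sum_filter_add_sum_filter_not Finset.univ
    (fun f : Fin m → Fin K => Function.Injective f)]
  have h0 : ∑ f ∈ Finset.univ.filter (fun f : Fin m → Fin K => ¬ Function.Injective f),
      (A.submatrix id f).det * ∏ i, B (f i) i = 0 := by
    apply Finset.sum_eq_zero; intro f hf
    replace hf := (Finset.mem_filter.1 hf).2
    simp only [Function.Injective] at hf
    push_neg at hf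
    obtain ⟨i, j, hij, hne⟩ := hf
    rw [Matrix.det_zero_of_column_eq hne (fun k => by simp [hij]), zero_mul]
  rw [h0, add_zero]
  have hRHS : ∀ g : Fin m → Fin K, (B.submatrix g id).det =
      ∑ π : Equiv.Perm (Fin m), Equiv.Perm.sign π • ∏ i, B (g (π i)) i := by
    intro g; rw [Matrix.det_apply]; rfl
  simp_rw [hRHS, Finset.mul_sum]
  rw [← Finset.sum_product']
  refine Finset.sum_bij' (fun f hf => (((Finset.image f Finset.univ).orderEmbOfFin
      (card_image_fin (Finset.mem_filter.1 hf).2) : Fin m → Fin K),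
      sortPerm (Finset.mem_filter.1 hf).2))
    (fun p hp => p.1 ∘ p.2) ?c1 ?c2 ?c3 ?c4 ?c5
  case c1 =>
    intro f hf
    refine Finset.mem_product.2 ⟨Finset.mem_filter.2 ⟨Finset.mem_univ _, ?_⟩, Finset.mem_univ _⟩
    exact (Finset.orderEmbOfFin _ _).strictMono
  case c2 =>
    intro p hp
    refine Finset.mem_filter.2 ⟨Finset.mem_univ _, ?_⟩
    have := (Finset.mem_filter.1 (Finset.mem_product.1 hp).1).2
    exact Function.Injective.comp this.injective p.2.injective
  case c3 =>
    intro f hf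
    funext i
    exact sortPerm_spec (Finset.mem_filter.1 hf).2 i
  case c4 =>
    intro p hp
    obtain ⟨g, π⟩ := p
    have hg : StrictMono g := (Finset.mem_filter.1 (Finset.mem_product.1 hp).1).2
    have hinj : Function.Injective (g ∘ π) := hg.injective.comp π.injective
    have himg : Finset.image (g ∘ π) Finset.univ = Finset.image g Finset.univ := by
      rw [← Finset.image_image]
      congr 1
      exact Finset.image_univ_equiv π
    have hge : ((Finset.image (g ∘ π) Finset.univ).orderEmbOfFin (card_image_fin hinj) :
        Fin m → Fin K) = g := by
      symm
      apply Finset.orderEmbOfFin_unique _ (fun x => by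
        rw [himg]; exact Finset.mem_image_of_mem g (Finset.mem_univ x)) hg
    have hπ : sortPerm hinj = π := by
      apply Equiv.ext
      intro i
      apply hg.injective
      have h1 := sortPerm_spec hinj i
      rw [hge] at h1
      exact h1
    have key : ((((Finset.image (g ∘ π) Finset.univ).orderEmbOfFin (card_image_fin hinj)) :
        Fin m → Fin K), sortPerm hinj) = ((g : Fin m → Fin K), π) := by
      rw [hπ]
      exact Prod.ext hge rfl
    exact key
  case c5 =>
    intro f hf
    have hf' := (Finset.mem_filter.1 hf).2
    have key : (A.submatrix id f).det * ∏ i, B (f i) i =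
        (A.submatrix id (((Finset.image f Finset.univ).orderEmbOfFin (card_image_fin hf')) :
          Fin m → Fin K)).det *
        (Equiv.Perm.sign (sortPerm hf') •
          ∏ i, B (((Finset.image f Finset.univ).orderEmbOfFin (card_image_fin hf'))
            (sortPerm hf' i)) i) := by
      set g : Fin m → Fin K :=
        ((Finset.image f Finset.univ).orderEmbOfFin (card_image_fin hf') : Fin m → Fin K)
      set π := sortPerm hf'
      have hfe : f = g ∘ π := by funext i; exact (sortPerm_spec hf' i).symm
      have hA : (A.submatrix id f).det = Equiv.Perm.sign π * (A.submatrix id g).det := by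
        rw [hfe]
        have : A.submatrix id (g ∘ π) = (A.submatrix id g).submatrix id π := rfl
        rw [this, Matrix.det_permute']
      have hprod : ∏ i, B (f i) i = ∏ i, B (g (π i)) i :=
        Finset.prod_congr rfl fun i _ => by rw [hfe]; rfl
      rw [hA, hprod, Units.smul_def, zsmul_eq_mul]
      ring
    exact key

lemma prod_orderEmbOfFin' {S : Finset (Fin K)} {h : S.card = m} (f : Fin K → ℝ) :
    ∏ t : Fin m, f (S.orderEmbOfFin h t) = ∏ i ∈ S, f i := by
  refine Finset.prod_bij (fun t _ => S.orderEmbOfFin h t)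
    (fun t _ => S.orderEmbOfFin_mem h t)
    (fun t₁ _ t₂ _ hee => (S.orderEmbOfFin h).injective hee)
    (fun i hi => ?_) (fun t _ => rfl)
  have : i ∈ Set.range (S.orderEmbOfFin h) := by rw [Finset.range_orderEmbOfFin]; exact hi
  obtain ⟨t, ht⟩ := this
  exact ⟨t, Finset.mem_univ t, ht⟩

lemma det_AAH (A : Matrix (Fin m) (Fin K) ℂ) :
    (A * Aᴴ).det = ((∑ g ∈ Finset.univ.filter (fun g : Fin m → Fin K => StrictMono g),
      Complex.normSq (A.submatrix id g).det : ℝ) : ℂ) := by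
  rw [cauchyBinet]
  rw [Complex.ofReal_sum]
  refine Finset.sum_congr rfl fun g hg => ?_
  rw [← Matrix.conjTranspose_submatrix, Matrix.det_conjTranspose]
  rw [show star (A.submatrix id g).det = (starRingEnd ℂ) (A.submatrix id g).det from rfl,
    Complex.mul_conj]

lemma det_ADAH (A : Matrix (Fin m) (Fin K) ℂ) (d : Fin K → ℝ) :
    (A * Matrix.diagonal (fun k => (d k : ℂ)) * Aᴴ).det =
      ((∑ g ∈ Finset.univ.filter (fun g : Fin m → Fin K => StrictMono g),
        Complex.normSq (A.submatrix id g).det * ∏ i, d (g i) : ℝ) : ℂ) := by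
  rw [cauchyBinet]
  rw [Complex.ofReal_sum]
  refine Finset.sum_congr rfl fun g hg => ?_
  have h1 : (A * Matrix.diagonal (fun k => (d k : ℂ))).submatrix id g =
      A.submatrix id g * Matrix.diagonal (fun i => (d (g i) : ℂ)) := by
    ext i j
    simp [Matrix.mul_apply, Matrix.diagonal, Matrix.submatrix_apply,
      Finset.sum_ite_eq, (Finset.mem_filter.1 hg).2.injective.eq_iff]
  rw [h1, Matrix.det_mul, Matrix.det_diagonal, ← Matrix.conjTranspose_submatrix,
    Matrix.det_conjTranspose]
  rw [mul_comm ((A.submatrix id g).det), mul_assoc]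
  rw [show star (A.submatrix id g).det = (starRingEnd ℂ) (A.submatrix id g).det from rfl,
    Complex.mul_conj]
  push_cast
  ring

lemma strictMono_fin_le {f : Fin m → Fin K} (hf : StrictMono f) (t : Fin m) :
    (t : ℕ) ≤ (f t : ℕ) := by
  obtain ⟨v, hv⟩ := t
  induction v with
  | zero => exact Nat.zero_le _
  | succ n ih =>
    have h1 : (⟨n, Nat.lt_of_succ_lt hv⟩ : Fin m) < ⟨n + 1, hv⟩ := by
      simp [Fin.lt_def]
    have h2 := hf h1
    have h3 := ih (Nat.lt_of_succ_lt hv)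
    have h4 := Fin.lt_def.1 h2
    simp only [Fin.val_mk] at h3 h4 ⊢
    omega

lemma tri_lower_bound {K m : ℕ} {L : Matrix (Fin K) (Fin K) ℂ}
    (hLtri : ∀ i k : Fin K, i < k → L i k = 0)
    (hLdiag : ∀ i : Fin K, (L i i).im = 0)
    (S : Finset (Fin K)) (hS : S.card = m) :
    ∏ i ∈ S, (L i i).re ^ 2 ≤
      (((L * Lᴴ).submatrix (S.orderEmbOfFin hS) (S.orderEmbOfFin hS)).det).re := by
  set e := S.orderEmbOfFin hS with he_def
  have hsub : (L * Lᴴ).submatrix e e = (L.submatrix e id) * ((L.submatrix e id))ᴴ := by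
    rw [Matrix.conjTranspose_submatrix]
    exact Matrix.submatrix_mul L Lᴴ e id e Function.bijective_id
  rw [hsub, det_AAH, Complex.ofReal_re]
  have he : (e : Fin m → Fin K) ∈
      Finset.univ.filter (fun g : Fin m → Fin K => StrictMono g) :=
    Finset.mem_filter.2 ⟨Finset.mem_univ _, (S.orderEmbOfFin hS).strictMono⟩
  have hterm : ∏ i ∈ S, (L i i).re ^ 2 =
      Complex.normSq ((L.submatrix e id).submatrix id (e : Fin m → Fin K)).det := by
    have h2 : (L.submatrix e id).submatrix id (e : Fin m → Fin K) = L.submatrix e e := rfl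
    rw [h2]
    have htri : (L.submatrix (e : Fin m → Fin K) (e : Fin m → Fin K)).BlockTriangular
        OrderDual.toDual := by
      intro i j hij
      exact hLtri _ _ ((S.orderEmbOfFin hS).strictMono hij)
    rw [Matrix.det_of_lowerTriangular _ htri, map_prod]
    rw [← prod_orderEmbOfFin' (h := hS) (f := fun i => (L i i).re ^ 2)]
    refine Finset.prod_congr rfl fun t _ => ?_
    rw [Matrix.submatrix_apply, Complex.normSq_apply, hLdiag]
    ring
  rw [hterm]
  exact Finset.single_le_sum
    (f := fun g : Fin m → Fin K => Complex.normSq ((L.submatrix (⇑e) id).submatrix id g).det)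
    (fun g _ => Complex.normSq_nonneg _) he

lemma prod_lam_injective {K m : ℕ} (lam : Fin K → ℝ) (hanti : Antitone lam)
    (hpos : ∀ i, 0 < lam i) (f : Fin m → Fin K) (hf : Function.Injective f) :
    ∏ i, lam (f i) ≤ ∏ i ∈ Finset.univ.filter (fun i : Fin K => (i : ℕ) < m), lam i := by
  have hm : m ≤ K := by
    simpa using Fintype.card_le_of_injective f hf
  have himg : (Finset.image f Finset.univ).card = m := card_image_fin hf
  set e := (Finset.image f Finset.univ).orderEmbOfFin himg with he_def
  have h1 : ∏ i, lam (f i) = ∏ t : Fin m, lam (e t) := by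
    rw [prod_orderEmbOfFin' (h := himg) (f := lam)]
    rw [Finset.prod_image (fun i _ j _ h => hf h)]
  rw [h1]
  have h2 : ∀ t : Fin m, lam (e t) ≤ lam (⟨(t : ℕ), lt_of_lt_of_le t.2 hm⟩ : Fin K) := by
    intro t
    apply hanti
    rw [Fin.le_def]
    exact strictMono_fin_le e.strictMono t
  calc ∏ t : Fin m, lam (e t) ≤ ∏ t : Fin m, lam (⟨(t : ℕ), lt_of_lt_of_le t.2 hm⟩ : Fin K) :=
        Finset.prod_le_prod (fun t _ => (hpos _).le) (fun t _ => h2 t)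
    _ = ∏ i ∈ Finset.univ.filter (fun i : Fin K => (i : ℕ) < m), lam i := by
        refine Finset.prod_bij (fun t _ => (⟨(t : ℕ), lt_of_lt_of_le t.2 hm⟩ : Fin K))
          (fun t _ => Finset.mem_filter.2 ⟨Finset.mem_univ _, t.2⟩)
          (fun t₁ _ t₂ _ h => by
            apply Fin.ext
            simpa [Fin.ext_iff] using h)
          (fun i hi => ⟨⟨(i : ℕ), (Finset.mem_filter.1 hi).2⟩, Finset.mem_univ _, by
            apply Fin.ext; rfl⟩)
          (fun t _ => rfl)

lemma det_submatrix_le {K m : ℕ} {N : Matrix (Fin K) (Fin K) ℂ} (hN : N.PosDef)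
    (lam : Fin K → ℝ) (hanti : Antitone lam)
    (hperm : ∃ σ : Equiv.Perm (Fin K), lam = hN.isHermitian.eigenvalues ∘ σ)
    (S : Finset (Fin K)) (hS : S.card = m) :
    ((N.submatrix (S.orderEmbOfFin hS) (S.orderEmbOfFin hS)).det).re ≤
      ∏ i ∈ Finset.univ.filter (fun i : Fin K => (i : ℕ) < m), lam i := by
  set e := S.orderEmbOfFin hS with he_def
  set U : Matrix (Fin K) (Fin K) ℂ :=
    (Matrix.IsHermitian.eigenvectorUnitary hN.isHermitian : Matrix (Fin K) (Fin K) ℂ) with hU_def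
  set d : Fin K → ℝ := hN.isHermitian.eigenvalues with hd_def
  have hUU : U * Uᴴ = 1 := by
    rw [← Matrix.star_eq_conjTranspose]
    exact Matrix.mem_unitaryGroup_iff.mp
      (Matrix.IsHermitian.eigenvectorUnitary hN.isHermitian).2
  have hspec : N = U * Matrix.diagonal (fun k => (d k : ℂ)) * Uᴴ := by
    have := Matrix.IsHermitian.spectral_theorem hN.isHermitian
    rw [← Matrix.star_eq_conjTranspose]
    rw [Unitary.conjStarAlgAut_apply] at this
    exact this
  have hsub : N.submatrix (e : Fin m → Fin K) (e : Fin m → Fin K) =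
      (U.submatrix (e : Fin m → Fin K) id) * Matrix.diagonal (fun k => (d k : ℂ)) *
        ((U.submatrix (e : Fin m → Fin K) id))ᴴ := by
    rw [hspec, Matrix.conjTranspose_submatrix]
    rw [Matrix.submatrix_mul _ _ (e : Fin m → Fin K) id (e : Fin m → Fin K)
      Function.bijective_id]
    rw [Matrix.submatrix_mul _ _ (e : Fin m → Fin K) id id Function.bijective_id]
    rw [Matrix.submatrix_id_id]
  have hone : (U.submatrix (e : Fin m → Fin K) id) *
      ((U.submatrix (e : Fin m → Fin K) id))ᴴ = (1 : Matrix (Fin m) (Fin m) ℂ) := by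
    rw [Matrix.conjTranspose_submatrix,
      ← Matrix.submatrix_mul _ _ (e : Fin m → Fin K) id (e : Fin m → Fin K)
        Function.bijective_id, hUU]
    ext i j
    simp [Matrix.one_apply, Matrix.submatrix_apply, e.injective.eq_iff]
  -- turn both determinants into real sums
  have hsum1 : ∑ g ∈ Finset.univ.filter (fun g : Fin m → Fin K => StrictMono g),
      Complex.normSq ((U.submatrix (e : Fin m → Fin K) id).submatrix id g).det = 1 := by
    have h := det_AAH (U.submatrix (e : Fin m → Fin K) id)
    rw [hone, Matrix.det_one] at h
    exact_mod_cast h.symm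
  rw [hsub, det_ADAH, Complex.ofReal_re]
  set P := ∏ i ∈ Finset.univ.filter (fun i : Fin K => (i : ℕ) < m), lam i with hP_def
  have hlampos : ∀ i, 0 < lam i := by
    obtain ⟨σ, hσ⟩ := hperm
    intro i
    rw [hσ]
    exact hN.eigenvalues_pos (σ i)
  have hdpos : ∀ i, 0 < d i := fun i => hN.eigenvalues_pos i
  have hPnonneg : 0 ≤ P :=
    Finset.prod_nonneg fun i _ => (hlampos i).le
  have hprodle : ∀ g : Fin m → Fin K, StrictMono g → ∏ i, d (g i) ≤ P := by
    intro g hg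
    obtain ⟨σ, hσ⟩ := hperm
    have hd' : d = lam ∘ σ.symm := by
      funext i
      rw [hσ]
      simp
    rw [hd']
    have : ∏ i, (lam ∘ σ.symm) (g i) = ∏ i, lam ((σ.symm ∘ g) i) := rfl
    rw [this]
    exact prod_lam_injective lam hanti hlampos (σ.symm ∘ g)
      (σ.symm.injective.comp hg.injective)
  calc ∑ g ∈ Finset.univ.filter (fun g : Fin m → Fin K => StrictMono g),
        Complex.normSq ((U.submatrix (e : Fin m → Fin K) id).submatrix id g).det *
          ∏ i, d (g i)
      ≤ ∑ g ∈ Finset.univ.filter (fun g : Fin m → Fin K => StrictMono g),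
        Complex.normSq ((U.submatrix (e : Fin m → Fin K) id).submatrix id g).det * P := by
        refine Finset.sum_le_sum fun g hg => ?_
        exact mul_le_mul_of_nonneg_left (hprodle g (Finset.mem_filter.1 hg).2)
          (Complex.normSq_nonneg _)
    _ = P := by rw [← Finset.sum_mul, hsum1, one_mul]

lemma card_filter_lt {K m : ℕ} (hm : m ≤ K) :
    (Finset.univ.filter (fun i : Fin K => (i : ℕ) < m)).card = m := by
  have h1 : Finset.univ.filter (fun i : Fin K => (i : ℕ) < m) =
      Finset.image (Fin.castLE hm) Finset.univ := by
    ext i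
    simp only [Finset.mem_filter, Finset.mem_univ, true_and, Finset.mem_image]
    constructor
    · intro hi
      exact ⟨⟨(i : ℕ), hi⟩, rfl⟩
    · rintro ⟨t, _, rfl⟩
      exact t.2
  rw [h1, Finset.card_image_of_injective _ (Fin.castLE_injective hm),
    Finset.card_univ, Fintype.card_fin]

lemma dfe_majorized {K : ℕ} {N L : Matrix (Fin K) (Fin K) ℂ} (hN : N.PosDef)
    (hLtri : ∀ i k : Fin K, i < k → L i k = 0)
    (hLdiag : ∀ i : Fin K, 0 < (L i i).re ∧ (L i i).im = 0)
    (hChol : N = L * Lᴴ)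
    (lam : Fin K → ℝ) (hanti : Antitone lam)
    (hperm : ∃ σ : Equiv.Perm (Fin K), lam = hN.isHermitian.eigenvalues ∘ σ) :
    IsMajorizedBy (fun k => Real.log ((L k k).re ^ 2)) (fun k => Real.log (lam k)) := by
  set a : Fin K → ℝ := fun k => Real.log ((L k k).re ^ 2) with ha_def
  set b : Fin K → ℝ := fun k => Real.log (lam k) with hb_def
  have hlampos : ∀ i, 0 < lam i := by
    obtain ⟨σ, hσ⟩ := hperm
    intro i
    rw [hσ]
    exact hN.eigenvalues_pos (σ i)
  have hLpos : ∀ i, (0:ℝ) < (L i i).re ^ 2 := fun i => pow_pos (hLdiag i).1 2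
  refine ⟨Tuple.sort (fun i => -(a i)), 1, ?_, ?_, ?_, ?_⟩
  · intro i j hij
    have := Tuple.monotone_sort (fun i => -(a i)) hij
    simpa using this
  · intro i j hij
    simp only [Function.comp, Equiv.Perm.coe_one, id_eq, hb_def]
    exact Real.log_le_log (hlampos j) (hanti hij)
  · intro j hj
    set σ := Tuple.sort (fun i => -(a i)) with hσ_def
    set m := j + 1 with hm_def
    have hmK : m ≤ K := hj
    have hfilter : Finset.univ.filter (fun i : Fin K => (i : ℕ) ≤ j) =
        Finset.univ.filter (fun i : Fin K => (i : ℕ) < m) := by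
      ext i
      simp [hm_def, Nat.lt_add_one_iff]
    set F := Finset.univ.filter (fun i : Fin K => (i : ℕ) ≤ j) with hF_def
    have hcardF : F.card = m := by
      rw [hfilter]
      exact card_filter_lt hmK
    set S := F.image σ with hS_def
    have hScard : S.card = m := by
      rw [hS_def, Finset.card_image_of_injective _ σ.injective, hcardF]
    have hsum1 : ∑ i ∈ F, a (σ i) = ∑ i ∈ S, a i :=
      (Finset.sum_image (fun x _ y _ h => σ.injective h)).symm
    have key1 : ∏ i ∈ S, (L i i).re ^ 2 ≤
        ((N.submatrix (S.orderEmbOfFin hScard) (S.orderEmbOfFin hScard)).det).re := by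
      rw [hChol]
      exact tri_lower_bound hLtri (fun i => (hLdiag i).2) S hScard
    have key2 := det_submatrix_le hN lam hanti hperm S hScard
    have key3 : ∏ i ∈ S, (L i i).re ^ 2 ≤
        ∏ i ∈ Finset.univ.filter (fun i : Fin K => (i : ℕ) < m), lam i :=
      le_trans key1 key2
    have hprodpos : (0:ℝ) < ∏ i ∈ S, (L i i).re ^ 2 :=
      Finset.prod_pos fun i _ => hLpos i
    have hlog1 : ∑ i ∈ S, a i = Real.log (∏ i ∈ S, (L i i).re ^ 2) :=
      (Real.log_prod (fun i _ => (hLpos i).ne')).symm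
    have hlog2 : ∑ i ∈ F, b i = Real.log (∏ i ∈ F, lam i) :=
      (Real.log_prod (fun i _ => (hlampos i).ne')).symm
    calc ∑ i ∈ Finset.univ.filter (fun i : Fin K => (i : ℕ) ≤ j), a (σ i)
        = Real.log (∏ i ∈ S, (L i i).re ^ 2) := by rw [← hlog1]; exact hsum1
      _ ≤ Real.log (∏ i ∈ F, lam i) := by
          apply Real.log_le_log hprodpos
          rw [hfilter]
          exact key3
      _ = ∑ i ∈ Finset.univ.filter (fun i : Fin K => (i : ℕ) ≤ j),
            b ((1 : Equiv.Perm (Fin K)) i) := by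
          simp only [Equiv.Perm.one_apply]
          exact hlog2.symm
  · -- total sums
    have hdetL : L.det = ∏ i, L i i :=
      Matrix.det_of_lowerTriangular L (fun i j hij => hLtri _ _ hij)
    have hdetN : N.det = Complex.ofReal (∏ i, (L i i).re ^ 2) := by
      rw [hChol, Matrix.det_mul, Matrix.det_conjTranspose, hdetL]
      rw [show star (∏ i, L i i) = (starRingEnd ℂ) (∏ i, L i i) from rfl, Complex.mul_conj]
      rw [map_prod Complex.normSq]
      exact congrArg _ (Finset.prod_congr rfl fun i _ => by
        rw [Complex.normSq_apply, (hLdiag i).2]; ring)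
    have hdetN2 : N.det = Complex.ofReal (∏ i, lam i) := by
      obtain ⟨σ, hσ⟩ := hperm
      have h3 : (∏ i, lam i) = ∏ i, hN.isHermitian.eigenvalues i := by
        rw [hσ]
        exact Equiv.prod_comp σ _
      rw [h3, hN.isHermitian.det_eq_prod_eigenvalues, Complex.ofReal_prod]
      norm_cast
    have hprod : ∏ i, (L i i).re ^ 2 = ∏ i, lam i := by
      have := hdetN.symm.trans hdetN2
      exact_mod_cast this
    have h1 : ∑ i, a i = Real.log (∏ i, (L i i).re ^ 2) :=
      (Real.log_prod (fun i _ => (hLpos i).ne')).symm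
    have h2 : ∑ i, b i = Real.log (∏ i, lam i) :=
      (Real.log_prod (fun i _ => (hlampos i).ne')).symm
    rw [h1, h2, hprod]


end Aux

/-- For positive definite matrices `N¹,…,N^J` with Cholesky
factors `L¹,…,L^J`, log-MSE vectors `l^j_DFE = (ln (L^j)₁₁²,…,ln (L^j)_KK²)`
and `l^j_Lin = (ln λ₁(N^j),…,ln λ_K(N^j))` (eigenvalues in nonincreasing
order), and any Schur-convex `g`,
`min_j g(l^j_DFE) ≤ min_j g(l^j_Lin)`. -/
theorem dfe_codebook_min_le_linear_codebook_min
    {K J : ℕ} (hJ : 0 < J)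
    (N : Fin J → Matrix (Fin K) (Fin K) ℂ) (hN : ∀ j, (N j).PosDef)
    (L : Fin J → Matrix (Fin K) (Fin K) ℂ)
    (hLtri : ∀ j, ∀ i k : Fin K, i < k → L j i k = 0)
    (hLdiag : ∀ j, ∀ i : Fin K, 0 < (L j i i).re ∧ (L j i i).im = 0)
    (hChol : ∀ j, N j = L j * (L j)ᴴ)
    (lam : Fin J → Fin K → ℝ)
    (hlam_anti : ∀ j, Antitone (lam j))
    (hlam : ∀ j, ∃ σ : Equiv.Perm (Fin K),
      lam j = (hN j).isHermitian.eigenvalues ∘ σ)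
    (g : (Fin K → ℝ) → ℝ) (hg : SchurConvex g) :
    ⨅ j : Fin J, g (fun k => Real.log ((L j k k).re ^ 2)) ≤
      ⨅ j : Fin J, g (fun k => Real.log (lam j k)) := by
  have : Nonempty (Fin J) := ⟨⟨0, hJ⟩⟩
  have key : ∀ j : Fin J, g (fun k => Real.log ((L j k k).re ^ 2)) ≤
      g (fun k => Real.log (lam j k)) := fun j =>
    hg _ _ (dfe_majorized (hN j) (hLtri j) (hLdiag j) (hChol j) (lam j)
      (hlam_anti j) (hlam j))
  exact ciInf_mono (Set.Finite.bddBelow (Set.finite_range _)) key
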